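/- Let A = diag(s₁,…,sₙ) and B = diag(d₁,…,d_r) be nonnegative diagonal matrices with r ≤ n. Then the function ψ(Y) = ‖A − YYᵀ‖_F² + 2⟨B, YᵀY⟩ over Y ∈ ℝ^{n×r} admits a minimizer Y* that is a generalized permutation matrix, i.e., Y* has at most one nonzero element per row and at most one nonzero element per column. -/

import Mathlib

open Matrix

/-- Squared Frobenius norm. -/
noncomputable def frob2 {m k : ℕ} (M : Matrix (Fin m) (Fin k) ℝ) : ℝ :=
  ∑ i, ∑ j, (M i j) ^ 2

/-- Frobenius inner product `⟨A, B⟩ = tr(AᵀB)`. -/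
noncomputable def fip {m k : ℕ} (A B : Matrix (Fin m) (Fin k) ℝ) : ℝ :=
  ∑ i, ∑ j, A i j * B i j

/-- A generalized permutation matrix: at most one nonzero entry per row and
at most one nonzero entry per column. -/
def IsGenPerm {n r : ℕ} (Y : Matrix (Fin n) (Fin r) ℝ) : Prop :=
  (∀ i j j', Y i j ≠ 0 → Y i j' ≠ 0 → j = j') ∧
  (∀ i i' j, Y i j ≠ 0 → Y i' j ≠ 0 → i = i')

section Aux
open Finset

noncomputable def shf {n : ℕ} (s : Fin n → ℝ) (σ : Equiv.Perm (Fin n)) : ℕ → ℝ :=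
  fun k => if h : k < n then s (σ ⟨k, h⟩) else 0


/-- Exchange lemma, upper version. -/
lemma ex_upper (n m : ℕ) (hm : m ≤ n) (s c : ℕ → ℝ)
    (hs0 : ∀ i, i < n → 0 ≤ s i)
    (hanti : ∀ i j, i ≤ j → j < n → s j ≤ s i)
    (hc0 : ∀ i, i < n → 0 ≤ c i) (hc1 : ∀ i, i < n → c i ≤ 1)
    (hsum : ∑ i ∈ range n, c i ≤ m) :
    ∑ i ∈ range n, c i * s i ≤ ∑ i ∈ range m, s i := by
  rcases eq_or_lt_of_le hm with h | hmn
  · subst h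
    apply Finset.sum_le_sum
    intro i hi
    rw [mem_range] at hi
    nlinarith [hs0 i hi, hc0 i hi, hc1 i hi]
  · set θ := s m with hθ
    have hθ0 : 0 ≤ θ := hs0 m hmn
    have key : ∀ i, i < n → c i * s i ≤ (if i < m then s i - θ else 0) + c i * θ := by
      intro i hi
      by_cases h : i < m
      · simp only [if_pos h]
        have h1 : θ ≤ s i := hanti i m (le_of_lt h) hmn
        nlinarith [hc0 i hi, hc1 i hi]
      · simp only [if_neg h]
        have h1 : s i ≤ θ := hanti m i (le_of_not_gt h) hi
        nlinarith [hc0 i hi]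
    have e1 : (∑ i ∈ range n, if i < m then s i - θ else 0) = ∑ i ∈ range m, (s i - θ) := by
      rw [← Finset.sum_subset (Finset.range_subset_range.mpr hm)
        (fun x _ hx => if_neg (by simpa using hx))]
      exact Finset.sum_congr rfl fun x hx => if_pos (mem_range.mp hx)
    have e2 : (∑ i ∈ range n, c i) * θ ≤ (m : ℝ) * θ := by
      exact mul_le_mul_of_nonneg_right hsum hθ0
    calc ∑ i ∈ range n, c i * s i
        ≤ ∑ i ∈ range n, ((if i < m then s i - θ else 0) + c i * θ) :=
          Finset.sum_le_sum fun i hi => key i (mem_range.mp hi)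
      _ = (∑ i ∈ range n, if i < m then s i - θ else 0) + (∑ i ∈ range n, c i) * θ := by
          rw [Finset.sum_add_distrib, Finset.sum_mul]
      _ ≤ (∑ i ∈ range m, (s i - θ)) + m * θ := by rw [e1]; linarith
      _ = ∑ i ∈ range m, s i := by
          rw [Finset.sum_sub_distrib]
          simp [Finset.card_range]

/-- Exchange lemma, lower version. -/
lemma ex_lower (r m : ℕ) (hm : m ≤ r) (d c : ℕ → ℝ)
    (hmono : ∀ i j, i ≤ j → j < r → d i ≤ d j)
    (hc0 : ∀ i, i < r → 0 ≤ c i) (hc1 : ∀ i, i < r → c i ≤ 1)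
    (hsum : ∑ i ∈ range r, c i = m) :
    ∑ i ∈ range m, d i ≤ ∑ i ∈ range r, c i * d i := by
  rcases eq_or_lt_of_le hm with h | hmr
  · have hone : ∀ i ∈ range r, c i = 1 := by
      have h0 : ∑ i ∈ range r, (1 - c i) = 0 := by
        rw [Finset.sum_sub_distrib, hsum, ← h]
        simp
      intro i hi
      have := (Finset.sum_eq_zero_iff_of_nonneg
        (fun j hj => by linarith [hc1 j (mem_range.mp hj)])).mp h0 i hi
      linarith
    apply le_of_eq
    rw [h]
    exact Finset.sum_congr rfl fun i hi => by rw [hone i hi, one_mul]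
  · set θ := d m with hθ
    have key : ∀ i, i < r → (if i < m then d i - θ else 0) + c i * θ ≤ c i * d i := by
      intro i hi
      by_cases h : i < m
      · simp only [if_pos h]
        have h1 : d i ≤ θ := hmono i m (le_of_lt h) hmr
        nlinarith [hc0 i hi, hc1 i hi]
      · simp only [if_neg h]
        have h1 : θ ≤ d i := hmono m i (le_of_not_gt h) hi
        nlinarith [hc0 i hi]
    have e1 : (∑ i ∈ range r, if i < m then d i - θ else 0) = ∑ i ∈ range m, (d i - θ) := by
      rw [← Finset.sum_subset (Finset.range_subset_range.mpr hm)
        (fun x _ hx => if_neg (by simpa using hx))]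
      exact Finset.sum_congr rfl fun x hx => if_pos (mem_range.mp hx)
    calc ∑ i ∈ range m, d i
        = (∑ i ∈ range m, (d i - θ)) + m * θ := by
          rw [Finset.sum_sub_distrib]; simp [Finset.card_range]
      _ = (∑ i ∈ range r, if i < m then d i - θ else 0) + (∑ i ∈ range r, c i) * θ := by
          rw [e1, hsum]
      _ = ∑ i ∈ range r, ((if i < m then d i - θ else 0) + c i * θ) := by
          rw [Finset.sum_add_distrib, Finset.sum_mul]
      _ ≤ ∑ i ∈ range r, c i * d i :=
          Finset.sum_le_sum fun i hi => key i (mem_range.mp hi)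

/-- Abel summation comparison. -/
lemma abel_le (r : ℕ) (μ x y : ℕ → ℝ)
    (hmono : ∀ i j, i ≤ j → j < r → μ j ≤ μ i)
    (hpos : ∀ i, i < r → 0 ≤ μ i)
    (hpre : ∀ l, l < r → ∑ k ∈ range (l+1), x k ≤ ∑ k ∈ range (l+1), y k) :
    ∑ k ∈ range r, μ k * x k ≤ ∑ k ∈ range r, μ k * y k := by
  induction r generalizing μ with
  | zero => simp
  | succ r ih =>
    have haux : ∀ z : ℕ → ℝ, ∑ k ∈ range r, (μ k - μ r) * z k
        = ∑ k ∈ range r, μ k * z k - μ r * ∑ k ∈ range r, z k := by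
      intro z
      rw [Finset.mul_sum, ← Finset.sum_sub_distrib]
      exact Finset.sum_congr rfl fun i _ => by ring
    have h1 : ∑ k ∈ range (r+1), μ k * x k
        = (∑ k ∈ range r, (μ k - μ r) * x k) + μ r * ∑ k ∈ range (r+1), x k := by
      rw [Finset.sum_range_succ, haux, Finset.sum_range_succ]; ring
    have h2 : ∑ k ∈ range (r+1), μ k * y k
        = (∑ k ∈ range r, (μ k - μ r) * y k) + μ r * ∑ k ∈ range (r+1), y k := by
      rw [Finset.sum_range_succ, haux, Finset.sum_range_succ]; ring
    rw [h1, h2]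
    have hA : ∑ k ∈ range r, (μ k - μ r) * x k ≤ ∑ k ∈ range r, (μ k - μ r) * y k := by
      apply ih
      · intro i j hij hj
        have := hmono i j hij (Nat.lt_succ_of_lt hj); linarith
      · intro i hi
        have := hmono i r (le_of_lt hi) (Nat.lt_succ_self r); linarith
      · intro l hl
        exact hpre l (Nat.lt_succ_of_lt hl)
    have hB : μ r * ∑ k ∈ range (r+1), x k ≤ μ r * ∑ k ∈ range (r+1), y k :=
      mul_le_mul_of_nonneg_left (hpre r (Nat.lt_succ_self r)) (hpos r (Nat.lt_succ_self r))
    linarith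

lemma fip_diagonal {r : ℕ} (d : Fin r → ℝ) (M : Matrix (Fin r) (Fin r) ℝ) :
    fip (Matrix.diagonal d) M = ∑ j, d j * M j j := by
  unfold fip
  apply Finset.sum_congr rfl
  intro j _
  rw [Finset.sum_eq_single_of_mem j (mem_univ j)
    (fun b _ hb => by rw [diagonal_apply_ne d (Ne.symm hb)]; ring), diagonal_apply_eq]

lemma frob2_diag_sub {n : ℕ} (s : Fin n → ℝ) (P : Matrix (Fin n) (Fin n) ℝ) :
    frob2 (Matrix.diagonal s - P)
      = ∑ i, (s i)^2 - 2 * ∑ i, s i * P i i + ∑ i, ∑ i', (P i i')^2 := by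
  unfold frob2
  have expand : ∀ i i' : Fin n, ((Matrix.diagonal s - P) i i')^2
      = (Matrix.diagonal s i i')^2 - 2 * (Matrix.diagonal s i i' * P i i') + (P i i')^2 := by
    intro i i'; simp [Matrix.sub_apply]; ring
  simp only [expand]
  have step : ∀ i : Fin n,
      (∑ i', ((Matrix.diagonal s i i')^2 - 2 * (Matrix.diagonal s i i' * P i i') + (P i i')^2))
      = (s i)^2 - 2 * (s i * P i i) + ∑ i', (P i i')^2 := by
    intro i
    rw [Finset.sum_add_distrib, Finset.sum_sub_distrib]
    congr 2
    · rw [Finset.sum_eq_single_of_mem i (mem_univ i)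
        (fun b _ hb => by rw [diagonal_apply_ne s (Ne.symm hb)]; ring), diagonal_apply_eq]
    · rw [← Finset.mul_sum]
      congr 1
      rw [Finset.sum_eq_single_of_mem i (mem_univ i)
        (fun b _ hb => by rw [diagonal_apply_ne s (Ne.symm hb)]; ring), diagonal_apply_eq]
  simp only [step]
  rw [Finset.sum_add_distrib, Finset.sum_sub_distrib, ← Finset.mul_sum]

lemma frob2_eq_trace {m k : ℕ} (M : Matrix (Fin m) (Fin k) ℝ) :
    frob2 M = Matrix.trace (M * Mᵀ) := by
  unfold frob2
  unfold Matrix.trace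
  apply Finset.sum_congr rfl
  intro i _
  simp [Matrix.mul_apply, Matrix.diag, pow_two]

lemma gram_frob {n r : ℕ} (Z : Matrix (Fin n) (Fin r) ℝ) :
    (∑ i, ∑ i', ((Z * Zᵀ) i i')^2) = ∑ k, ∑ k', ((Zᵀ * Z) k k')^2 := by
  have h1 : (∑ i, ∑ i', ((Z * Zᵀ) i i')^2) = frob2 (Z * Zᵀ) := rfl
  have h2 : (∑ k, ∑ k', ((Zᵀ * Z) k k')^2) = frob2 (Zᵀ * Z) := rfl
  rw [h1, h2, frob2_eq_trace, frob2_eq_trace]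
  rw [Matrix.transpose_mul, Matrix.transpose_transpose, Matrix.transpose_mul,
    Matrix.transpose_transpose]
  rw [Matrix.mul_assoc Z Zᵀ (Z * Zᵀ), Matrix.trace_mul_comm Z (Zᵀ * (Z * Zᵀ))]
  simp [Matrix.mul_assoc]

lemma sum_dite_range {r : ℕ} (f : Fin r → ℝ) :
    ∑ k ∈ range r, (if h : k < r then f ⟨k, h⟩ else 0) = ∑ k : Fin r, f k := by
  rw [← Fin.sum_univ_eq_sum_range (fun k => if h : k < r then f ⟨k, h⟩ else 0) r]
  apply Finset.sum_congr rfl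
  intro k _
  simp [k.isLt]

section SPEC
variable {n r : ℕ} (Y : Matrix (Fin n) (Fin r) ℝ)

-- spectral data facts
lemma spec_facts :
    ∃ (U : Matrix (Fin r) (Fin r) ℝ) (μ : Fin r → ℝ),
      (∀ k, 0 ≤ μ k) ∧
      (∀ k k', ∑ j, U j k * U j k' = if k = k' then (1:ℝ) else 0) ∧
      (∀ j j', ∑ k, U j k * U j' k = if j = j' then (1:ℝ) else 0) ∧
      (∀ j l, (Yᵀ * Y) j l = ∑ k, μ k * (U j k * U l k)) ∧
      ((Y * U)ᵀ * (Y * U) = Matrix.diagonal μ) ∧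
      (Y * Yᵀ = (Y * U) * (Y * U)ᵀ) := by
  have hYT : Yᴴ = Yᵀ := by ext i j; simp [conjTranspose_apply]
  have hQher : (Yᴴ * Y).IsHermitian := isHermitian_conjTranspose_mul_self Y
  have hQpsd : (Yᴴ * Y).PosSemidef := posSemidef_conjTranspose_mul_self Y
  set U : Matrix (Fin r) (Fin r) ℝ := (hQher.eigenvectorUnitary : Matrix (Fin r) (Fin r) ℝ) with hU
  set μ : Fin r → ℝ := hQher.eigenvalues with hμ
  have hμ0 : ∀ k, 0 ≤ μ k := fun k => hQpsd.eigenvalues_nonneg k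
  have hstar : star U = Uᵀ := by
    rw [Matrix.star_eq_conjTranspose]
    ext i j; simp [conjTranspose_apply]
  have hU1 : Uᵀ * U = 1 := by
    rw [← hstar]; exact (Unitary.mem_iff.mp (hQher.eigenvectorUnitary).2).1
  have hU2 : U * Uᵀ = 1 := by
    rw [← hstar]; exact (Unitary.mem_iff.mp (hQher.eigenvectorUnitary).2).2
  have hspec : Yᴴ * Y = U * Matrix.diagonal μ * Uᵀ := by
    rw [← hstar]
    have := hQher.spectral_theorem
    rw [Unitary.conjStarAlgAut_apply] at this
    exact this
  refine ⟨U, μ, hμ0, ?_, ?_, ?_, ?_, ?_⟩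
  · intro k k'
    have := congrFun (congrFun hU1 k) k'
    simpa [Matrix.mul_apply, Matrix.one_apply] using this
  · intro j j'
    have := congrFun (congrFun hU2 j) j'
    simpa [Matrix.mul_apply, Matrix.one_apply] using this
  · intro j l
    have h : (Yᵀ * Y) j l = (U * Matrix.diagonal μ * Uᵀ) j l := by rw [← hYT, hspec]
    rw [h]
    rw [Matrix.mul_apply]
    apply Finset.sum_congr rfl
    intro k _
    rw [Matrix.mul_diagonal]
    simp [transpose_apply]
    ring
  · have step1 : (Y * U)ᵀ * (Y * U) = Uᵀ * ((Yᵀ * Y) * U) := by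
      rw [Matrix.transpose_mul]
      simp only [Matrix.mul_assoc]
    rw [step1, ← hYT, hspec]
    simp only [Matrix.mul_assoc]
    rw [hU1, Matrix.mul_one, ← Matrix.mul_assoc Uᵀ U, hU1, Matrix.one_mul]
  · have step2 : (Y * U) * (Y * U)ᵀ = Y * Yᵀ := by
      rw [Matrix.transpose_mul, Matrix.mul_assoc, ← Matrix.mul_assoc U Uᵀ Yᵀ, hU2,
        Matrix.one_mul]
    exact step2.symm
end SPEC

lemma psi_lower {n r : ℕ} (hr : r ≤ n) (s : Fin n → ℝ) (d : Fin r → ℝ)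
    (hs : ∀ i, 0 ≤ s i) (hd : ∀ j, 0 ≤ d j)
    (σ : Equiv.Perm (Fin n)) (δ : Equiv.Perm (Fin r))
    (hσ : Antitone (fun i => s (σ i))) (hδ : Monotone (fun j => d (δ j)))
    (Y : Matrix (Fin n) (Fin r) ℝ) :
    (∑ i, (s i)^2) - ∑ k ∈ range r, (max (shf s σ k - shf d δ k) 0)^2
      ≤ frob2 (Matrix.diagonal s - Y * Yᵀ) + 2 * fip (Matrix.diagonal d) (Yᵀ * Y) := by
  obtain ⟨U, μ, hμ0, hUcol, hUrow, hQentry, hZZ, hYY⟩ := spec_facts Y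
  set Z := Y * U with hZdef
  have hZorth : ∀ k k', (∑ i, Z i k * Z i k') = if k = k' then μ k else 0 := by
    intro k k'
    have h := congrFun (congrFun hZZ k) k'
    simpa [Matrix.mul_apply, Matrix.transpose_apply, Matrix.diagonal_apply] using h
  have hP : ∀ i i', (Y * Yᵀ) i i' = ∑ k, Z i k * Z i' k := by
    intro i i'
    rw [hYY, Matrix.mul_apply]
    simp [Matrix.transpose_apply]
  -- normalized columns
  set W : Fin n → Fin r → ℝ :=
    fun i k => if μ k = 0 then 0 else Z i k / Real.sqrt (μ k) with hWdef
  have hZcol0 : ∀ k, μ k = 0 → ∀ i, Z i k = 0 := by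
    intro k hk i
    have h := hZorth k k
    rw [if_pos rfl, hk] at h
    have := (Finset.sum_eq_zero_iff_of_nonneg
      (fun j (_ : j ∈ univ) => mul_self_nonneg (Z j k))).mp h i (mem_univ i)
    exact mul_self_eq_zero.mp this
  have hsqrt_pos : ∀ k, μ k ≠ 0 → 0 < Real.sqrt (μ k) :=
    fun k hk => Real.sqrt_pos.mpr (lt_of_le_of_ne (hμ0 k) (Ne.symm hk))
  have hWsq : ∀ i k, (Z i k)^2 = μ k * (W i k)^2 := by
    intro i k
    by_cases h : μ k = 0
    · simp [hWdef, h, hZcol0 k h i]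
    · simp only [hWdef, if_neg h]
      rw [div_pow, Real.sq_sqrt (hμ0 k)]
      field_simp
  have hWorth : ∀ k k', (∑ i, W i k * W i k')
      = if k = k' then (if μ k = 0 then 0 else 1) else 0 := by
    intro k k'
    by_cases hk : μ k = 0
    · simp [hWdef, hk]
    · by_cases hk' : μ k' = 0
      · have : k ≠ k' := fun h => hk (h ▸ hk')
        simp [hWdef, hk, hk', this]
      · have hstep : ∀ i, W i k * W i k'
            = (Z i k * Z i k') / (Real.sqrt (μ k) * Real.sqrt (μ k')) := by
          intro i
          simp only [hWdef, if_neg hk, if_neg hk']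
          field_simp
        rw [Finset.sum_congr rfl (fun i _ => hstep i), ← Finset.sum_div, hZorth]
        by_cases hkk : k = k'
        · subst hkk
          rw [if_pos rfl, if_pos rfl, if_neg hk, Real.mul_self_sqrt (hμ0 k), div_self hk]
        · rw [if_neg hkk, if_neg hkk, zero_div]
  have hWrow : ∀ i, (∑ k, (W i k)^2) ≤ 1 := by
    intro i
    set ρ := ∑ k, (W i k)^2 with hρdef
    have hρ0 : (0:ℝ) ≤ ρ := Finset.sum_nonneg fun k _ => sq_nonneg _
    have hg : ρ = ∑ k, W i k * W i k :=
      Finset.sum_congr rfl fun k _ => pow_two (W i k)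
    have h1 : ρ^2 ≤ ∑ m, (∑ k, W i k * W m k)^2 := by
      have hsingle := Finset.single_le_sum
        (f := fun m => (∑ k, W i k * W m k)^2) (fun m _ => sq_nonneg _) (mem_univ i)
      calc ρ^2 = (∑ k, W i k * W i k)^2 := by rw [hg]
        _ ≤ _ := hsingle
    have h2 : (∑ m, (∑ k, W i k * W m k)^2)
        = ∑ k, (if μ k = 0 then (0:ℝ) else 1) * (W i k)^2 := by
      calc ∑ m, (∑ k, W i k * W m k)^2
          = ∑ m, ∑ k, ∑ k', (W i k * W m k) * (W i k' * W m k') := by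
            apply Finset.sum_congr rfl
            intro m _
            rw [pow_two, Finset.sum_mul_sum]
        _ = ∑ k, ∑ k', (W i k * W i k') * (∑ m, W m k * W m k') := by
            rw [Finset.sum_comm]
            apply Finset.sum_congr rfl
            intro k _
            rw [Finset.sum_comm]
            apply Finset.sum_congr rfl
            intro k' _
            rw [Finset.mul_sum]
            apply Finset.sum_congr rfl
            intro m _
            ring
        _ = ∑ k, (if μ k = 0 then (0:ℝ) else 1) * (W i k)^2 := by
            apply Finset.sum_congr rfl
            intro k _
            rw [Finset.sum_eq_single_of_mem k (mem_univ k) (fun k' _ hk' => by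
              rw [hWorth k k', if_neg (Ne.symm hk'), mul_zero])]
            rw [hWorth k k, if_pos rfl, pow_two]
            ring
    have h3 : (∑ k, (if μ k = 0 then (0:ℝ) else 1) * (W i k)^2) ≤ ρ := by
      rw [hρdef]
      apply Finset.sum_le_sum
      intro k _
      by_cases h : μ k = 0
      · simp [h, sq_nonneg]
      · simp [h]
    have hρρ : ρ^2 ≤ ρ := le_trans h1 (le_trans (le_of_eq h2) h3)
    nlinarith
  -- scalar quantities
  set av : Fin r → ℝ := fun k => ∑ i, s i * (Z i k)^2 with havdef
  set xv : Fin r → ℝ := fun k => ∑ i, s i * (W i k)^2 with hxvdef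
  set bv : Fin r → ℝ := fun k => ∑ j, d j * (U j k)^2 with hbvdef
  have hax : ∀ k, av k = μ k * xv k := by
    intro k
    simp only [havdef, hxvdef]
    rw [Finset.mul_sum]
    apply Finset.sum_congr rfl
    intro i _
    rw [hWsq]
    ring
  -- expansion of the objective
  have hfrob : frob2 (Matrix.diagonal s - Y * Yᵀ)
      = ∑ i, (s i)^2 - 2 * (∑ k, av k) + ∑ k, (μ k)^2 := by
    rw [frob2_diag_sub]
    have e1 : (∑ i, s i * (Y * Yᵀ) i i) = ∑ k, av k := by
      calc ∑ i, s i * (Y * Yᵀ) i i = ∑ i, ∑ k, s i * (Z i k)^2 := by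
            apply Finset.sum_congr rfl
            intro i _
            rw [hP, Finset.mul_sum]
            apply Finset.sum_congr rfl
            intro k _
            rw [pow_two]
        _ = ∑ k, av k := by
            rw [Finset.sum_comm]
    have e2 : (∑ i, ∑ i', ((Y * Yᵀ) i i')^2) = ∑ k, (μ k)^2 := by
      rw [hYY, gram_frob, hZZ]
      apply Finset.sum_congr rfl
      intro k _
      rw [Finset.sum_eq_single_of_mem k (mem_univ k) (fun c _ hc => by
        rw [Matrix.diagonal_apply_ne μ (Ne.symm hc)]; ring)]
      rw [Matrix.diagonal_apply_eq]
    rw [e1, e2]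
  have hfip : fip (Matrix.diagonal d) (Yᵀ * Y) = ∑ k, μ k * bv k := by
    rw [fip_diagonal]
    calc ∑ j, d j * (Yᵀ * Y) j j = ∑ j, ∑ k, μ k * (d j * (U j k)^2) := by
          apply Finset.sum_congr rfl
          intro j _
          rw [hQentry, Finset.mul_sum]
          apply Finset.sum_congr rfl
          intro k _
          rw [pow_two]
          ring
      _ = ∑ k, μ k * bv k := by
          rw [Finset.sum_comm]
          apply Finset.sum_congr rfl
          intro k _
          simp only [hbvdef]
          rw [Finset.mul_sum]
  -- sort the eigenvalues in decreasing order
  set τ : Equiv.Perm (Fin r) := Tuple.sort (fun k => -μ k) with hτdef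
  have hτanti : Antitone (fun k => μ (τ k)) := by
    intro i j hij
    have h := Tuple.monotone_sort (fun k => -μ k) hij
    simpa using h
  set μ' : ℕ → ℝ := fun k => if h : k < r then μ (τ ⟨k, h⟩) else 0 with hμ'def
  set x' : ℕ → ℝ := fun k => if h : k < r then xv (τ ⟨k, h⟩) else 0 with hx'def
  set b' : ℕ → ℝ := fun k => if h : k < r then bv (τ ⟨k, h⟩) else 0 with hb'def
  -- prefix sum claims
  have claimX : ∀ m : ℕ, m ≤ r →
      (∑ k ∈ range m, x' k) ≤ ∑ k ∈ range m, shf s σ k := by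
    intro m hm
    set C : Fin n → ℝ :=
      fun i => ∑ k ∈ range m, (if h : k < r then (W i (τ ⟨k, h⟩))^2 else 0) with hCdef
    have hdite0 : ∀ (i : Fin n) (k : ℕ),
        0 ≤ (if h : k < r then (W i (τ ⟨k, h⟩))^2 else 0) := by
      intro i k
      by_cases h : k < r
      · simp [h, sq_nonneg]
      · simp [h]
    have hC0 : ∀ i, 0 ≤ C i := fun i => Finset.sum_nonneg fun k _ => hdite0 i k
    have hC1 : ∀ i, C i ≤ 1 := by
      intro i
      have step : C i ≤ ∑ k ∈ range r, (if h : k < r then (W i (τ ⟨k, h⟩))^2 else 0) :=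
        Finset.sum_le_sum_of_subset_of_nonneg (range_subset_range.mpr hm)
          (fun k _ _ => hdite0 i k)
      have step2 : (∑ k ∈ range r, (if h : k < r then (W i (τ ⟨k, h⟩))^2 else 0))
          = ∑ k : Fin r, (W i (τ k))^2 := sum_dite_range (fun k => (W i (τ k))^2)
      have step3 : (∑ k : Fin r, (W i (τ k))^2) = ∑ k, (W i k)^2 :=
        Equiv.sum_comp τ (fun k => (W i k)^2)
      calc C i ≤ _ := step
        _ = _ := step2
        _ = _ := step3
        _ ≤ 1 := hWrow i
    have hCsum : (∑ i ∈ range n, (if h : i < n then C (σ ⟨i, h⟩) else 0)) ≤ (m:ℝ) := by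
      rw [sum_dite_range (fun i => C (σ i)), Equiv.sum_comp σ C]
      have swap : (∑ i : Fin n, C i)
          = ∑ k ∈ range m, ∑ i : Fin n, (if h : k < r then (W i (τ ⟨k, h⟩))^2 else 0) := by
        simp only [hCdef]
        rw [Finset.sum_comm]
      rw [swap]
      have bnd : ∀ k ∈ range m,
          (∑ i : Fin n, (if h : k < r then (W i (τ ⟨k, h⟩))^2 else 0)) ≤ 1 := by
        intro k hk
        have hkr : k < r := lt_of_lt_of_le (mem_range.mp hk) hm
        simp only [dif_pos hkr]
        have : (∑ i : Fin n, (W i (τ ⟨k, hkr⟩))^2)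
            = ∑ i, W i (τ ⟨k, hkr⟩) * W i (τ ⟨k, hkr⟩) :=
          Finset.sum_congr rfl fun i _ => pow_two _
        rw [this, hWorth, if_pos rfl]
        by_cases h : μ (τ ⟨k, hkr⟩) = 0
        · simp [h]
        · simp [h]
      calc (∑ k ∈ range m, ∑ i : Fin n, (if h : k < r then (W i (τ ⟨k, h⟩))^2 else 0))
          ≤ ∑ _k ∈ range m, (1:ℝ) := Finset.sum_le_sum bnd
        _ = m := by simp
    have hex := ex_upper n m (le_trans hm hr) (shf s σ)
      (fun i => if h : i < n then C (σ ⟨i, h⟩) else 0)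
      (fun i hi => by simp only [shf, dif_pos hi]; exact hs _)
      (fun i j hij hj => by
        have hin : i < n := lt_of_le_of_lt hij hj
        simp only [shf, dif_pos hin, dif_pos hj]
        exact hσ (by exact_mod_cast hij : (⟨i, hin⟩ : Fin n) ≤ ⟨j, hj⟩))
      (fun i hi => by simp only [dif_pos hi]; exact hC0 _)
      (fun i hi => by simp only [dif_pos hi]; exact hC1 _)
      hCsum
    have lhs_eq : (∑ k ∈ range m, x' k)
        = ∑ i ∈ range n, (if h : i < n then C (σ ⟨i, h⟩) else 0) * shf s σ i := by
      calc ∑ k ∈ range m, x' k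
          = ∑ k ∈ range m, ∑ i : Fin n,
              s i * (if h : k < r then (W i (τ ⟨k, h⟩))^2 else 0) := by
            apply Finset.sum_congr rfl
            intro k hk
            have hkr : k < r := lt_of_lt_of_le (mem_range.mp hk) hm
            simp only [hx'def, dif_pos hkr, hxvdef]
        _ = ∑ i : Fin n, ∑ k ∈ range m,
              s i * (if h : k < r then (W i (τ ⟨k, h⟩))^2 else 0) := Finset.sum_comm
        _ = ∑ i : Fin n, C i * s i := by
            apply Finset.sum_congr rfl
            intro i _
            rw [← Finset.mul_sum]
            simp only [hCdef]
            ring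
        _ = ∑ i : Fin n, C (σ i) * s (σ i) :=
            (Equiv.sum_comp σ (fun i => C i * s i)).symm
        _ = ∑ i ∈ range n, (if h : i < n then C (σ ⟨i, h⟩) * s (σ ⟨i, h⟩) else 0) :=
            (sum_dite_range (fun i => C (σ i) * s (σ i))).symm
        _ = ∑ i ∈ range n, (if h : i < n then C (σ ⟨i, h⟩) else 0) * shf s σ i := by
            apply Finset.sum_congr rfl
            intro i hi
            have hin : i < n := mem_range.mp hi
            simp only [dif_pos hin, shf]
    rw [lhs_eq]
    exact hex
  have claimB : ∀ m : ℕ, m ≤ r →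
      (∑ k ∈ range m, shf d δ k) ≤ ∑ k ∈ range m, b' k := by
    intro m hm
    set C : Fin r → ℝ :=
      fun j => ∑ k ∈ range m, (if h : k < r then (U j (τ ⟨k, h⟩))^2 else 0) with hCdef
    have hdite0 : ∀ (j : Fin r) (k : ℕ),
        0 ≤ (if h : k < r then (U j (τ ⟨k, h⟩))^2 else 0) := by
      intro j k
      by_cases h : k < r
      · simp [h, sq_nonneg]
      · simp [h]
    have hC0 : ∀ j, 0 ≤ C j := fun j => Finset.sum_nonneg fun k _ => hdite0 j k
    have hUrow1 : ∀ j : Fin r, (∑ k, (U j k)^2) = 1 := by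
      intro j
      have h := hUrow j j
      rw [if_pos rfl] at h
      rw [← h]
      exact Finset.sum_congr rfl fun k _ => pow_two _
    have hUcol1 : ∀ k : Fin r, (∑ j, (U j k)^2) = 1 := by
      intro k
      have h := hUcol k k
      rw [if_pos rfl] at h
      rw [← h]
      exact Finset.sum_congr rfl fun j _ => pow_two _
    have hC1 : ∀ j, C j ≤ 1 := by
      intro j
      have step : C j ≤ ∑ k ∈ range r, (if h : k < r then (U j (τ ⟨k, h⟩))^2 else 0) :=
        Finset.sum_le_sum_of_subset_of_nonneg (range_subset_range.mpr hm)
          (fun k _ _ => hdite0 j k)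
      have step2 : (∑ k ∈ range r, (if h : k < r then (U j (τ ⟨k, h⟩))^2 else 0))
          = ∑ k : Fin r, (U j (τ k))^2 := sum_dite_range (fun k => (U j (τ k))^2)
      have step3 : (∑ k : Fin r, (U j (τ k))^2) = ∑ k, (U j k)^2 :=
        Equiv.sum_comp τ (fun k => (U j k)^2)
      calc C j ≤ _ := step
        _ = _ := step2
        _ = _ := step3
        _ = 1 := hUrow1 j
    have hCsum : (∑ j ∈ range r, (if h : j < r then C (δ ⟨j, h⟩) else 0)) = (m:ℝ) := by
      rw [sum_dite_range (fun j => C (δ j)), Equiv.sum_comp δ C]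
      have swap : (∑ j : Fin r, C j)
          = ∑ k ∈ range m, ∑ j : Fin r, (if h : k < r then (U j (τ ⟨k, h⟩))^2 else 0) := by
        simp only [hCdef]
        rw [Finset.sum_comm]
      rw [swap]
      have bnd : ∀ k ∈ range m,
          (∑ j : Fin r, (if h : k < r then (U j (τ ⟨k, h⟩))^2 else 0)) = 1 := by
        intro k hk
        have hkr : k < r := lt_of_lt_of_le (mem_range.mp hk) hm
        simp only [dif_pos hkr]
        exact hUcol1 _
      rw [Finset.sum_congr rfl bnd]
      simp
    have hex := ex_lower r m hm (shf d δ)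
      (fun j => if h : j < r then C (δ ⟨j, h⟩) else 0)
      (fun i j hij hj => by
        have hir : i < r := lt_of_le_of_lt hij hj
        simp only [shf, dif_pos hir, dif_pos hj]
        exact hδ (by exact_mod_cast hij : (⟨i, hir⟩ : Fin r) ≤ ⟨j, hj⟩))
      (fun j hj => by simp only [dif_pos hj]; exact hC0 _)
      (fun j hj => by simp only [dif_pos hj]; exact hC1 _)
      hCsum
    have rhs_eq : (∑ k ∈ range m, b' k)
        = ∑ j ∈ range r, (if h : j < r then C (δ ⟨j, h⟩) else 0) * shf d δ j := by
      calc ∑ k ∈ range m, b' k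
          = ∑ k ∈ range m, ∑ j : Fin r,
              d j * (if h : k < r then (U j (τ ⟨k, h⟩))^2 else 0) := by
            apply Finset.sum_congr rfl
            intro k hk
            have hkr : k < r := lt_of_lt_of_le (mem_range.mp hk) hm
            simp only [hb'def, dif_pos hkr, hbvdef]
        _ = ∑ j : Fin r, ∑ k ∈ range m,
              d j * (if h : k < r then (U j (τ ⟨k, h⟩))^2 else 0) := Finset.sum_comm
        _ = ∑ j : Fin r, C j * d j := by
            apply Finset.sum_congr rfl
            intro j _
            rw [← Finset.mul_sum]
            simp only [hCdef]
            ring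
        _ = ∑ j : Fin r, C (δ j) * d (δ j) :=
            (Equiv.sum_comp δ (fun j => C j * d j)).symm
        _ = ∑ j ∈ range r, (if h : j < r then C (δ ⟨j, h⟩) * d (δ ⟨j, h⟩) else 0) :=
            (sum_dite_range (fun j => C (δ j) * d (δ j))).symm
        _ = ∑ j ∈ range r, (if h : j < r then C (δ ⟨j, h⟩) else 0) * shf d δ j := by
            apply Finset.sum_congr rfl
            intro j hj
            have hjr : j < r := mem_range.mp hj
            simp only [dif_pos hjr, shf]
    rw [rhs_eq]
    exact hex
  -- Abel summation
  have habel := abel_le r μ'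
    (fun k => -2 * shf s σ k + 2 * shf d δ k)
    (fun k => -2 * x' k + 2 * b' k)
    (fun i j hij hj => by
      have hir : i < r := lt_of_le_of_lt hij hj
      simp only [hμ'def, dif_pos hir, dif_pos hj]
      exact hτanti (by exact_mod_cast hij : (⟨i, hir⟩ : Fin r) ≤ ⟨j, hj⟩))
    (fun i hi => by simp only [hμ'def, dif_pos hi]; exact hμ0 _)
    (by
      intro l hl
      have h1 := claimX (l+1) (Nat.succ_le_of_lt hl)
      have h2 := claimB (l+1) (Nat.succ_le_of_lt hl)
      have e1 : (∑ k ∈ range (l+1), (-2 * shf s σ k + 2 * shf d δ k))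
          = -2 * (∑ k ∈ range (l+1), shf s σ k) + 2 * (∑ k ∈ range (l+1), shf d δ k) := by
        rw [Finset.sum_add_distrib, ← Finset.mul_sum, ← Finset.mul_sum]
      have e2 : (∑ k ∈ range (l+1), (-2 * x' k + 2 * b' k))
          = -2 * (∑ k ∈ range (l+1), x' k) + 2 * (∑ k ∈ range (l+1), b' k) := by
        rw [Finset.sum_add_distrib, ← Finset.mul_sum, ← Finset.mul_sum]
      rw [e1, e2]
      linarith)
  -- convert the full sums to sorted range sums
  have hconv : ∀ f : Fin r → ℝ,
      (∑ k, f k) = ∑ k ∈ range r, (if h : k < r then f (τ ⟨k, h⟩) else 0) := by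
    intro f
    rw [sum_dite_range (fun k => f (τ k)), Equiv.sum_comp τ f]
  have hμsq : (∑ k, (μ k)^2) = ∑ k ∈ range r, (μ' k)^2 := by
    rw [hconv (fun k => (μ k)^2)]
    apply Finset.sum_congr rfl
    intro k hk
    have hkr : k < r := mem_range.mp hk
    simp only [hμ'def, dif_pos hkr]
  have hμx : (∑ k, av k) = ∑ k ∈ range r, μ' k * x' k := by
    rw [Finset.sum_congr rfl (fun k _ => hax k), hconv (fun k => μ k * xv k)]
    apply Finset.sum_congr rfl
    intro k hk
    have hkr : k < r := mem_range.mp hk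
    simp only [hμ'def, hx'def, dif_pos hkr]
  have hμb : (∑ k, μ k * bv k) = ∑ k ∈ range r, μ' k * b' k := by
    rw [hconv (fun k => μ k * bv k)]
    apply Finset.sum_congr rfl
    intro k hk
    have hkr : k < r := mem_range.mp hk
    simp only [hμ'def, hb'def, dif_pos hkr]
  -- final pointwise bound
  have hperk : ∀ k ∈ range r,
      -(max (shf s σ k - shf d δ k) 0)^2
        ≤ (μ' k)^2 + μ' k * (-2 * shf s σ k + 2 * shf d δ k) := by
    intro k hk
    have hkr : k < r := mem_range.mp hk
    have h0 : 0 ≤ μ' k := by simp only [hμ'def, dif_pos hkr]; exact hμ0 _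
    set e := shf s σ k - shf d δ k with hedef
    have he : μ' k * (-2 * shf s σ k + 2 * shf d δ k) = -2 * μ' k * e := by
      rw [hedef]; ring
    rw [he]
    rcases le_or_gt e 0 with h | h
    · rw [max_eq_right h]
      nlinarith
    · rw [max_eq_left h.le]
      nlinarith [sq_nonneg (μ' k - e)]
  have hsums : (∑ k ∈ range r, -(max (shf s σ k - shf d δ k) 0)^2)
      ≤ ∑ k ∈ range r, ((μ' k)^2 + μ' k * (-2 * x' k + 2 * b' k)) := by
    calc (∑ k ∈ range r, -(max (shf s σ k - shf d δ k) 0)^2)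
        ≤ ∑ k ∈ range r, ((μ' k)^2 + μ' k * (-2 * shf s σ k + 2 * shf d δ k)) :=
          Finset.sum_le_sum hperk
      _ = (∑ k ∈ range r, (μ' k)^2)
          + ∑ k ∈ range r, μ' k * (-2 * shf s σ k + 2 * shf d δ k) :=
          Finset.sum_add_distrib
      _ ≤ (∑ k ∈ range r, (μ' k)^2)
          + ∑ k ∈ range r, μ' k * (-2 * x' k + 2 * b' k) := by linarith [habel]
      _ = ∑ k ∈ range r, ((μ' k)^2 + μ' k * (-2 * x' k + 2 * b' k)) :=
          Finset.sum_add_distrib.symm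
  have hexp : (∑ k ∈ range r, ((μ' k)^2 + μ' k * (-2 * x' k + 2 * b' k)))
      = (∑ k ∈ range r, (μ' k)^2) - 2 * (∑ k ∈ range r, μ' k * x' k)
        + 2 * (∑ k ∈ range r, μ' k * b' k) := by
    rw [Finset.sum_congr rfl (fun k _ => by
      show (μ' k)^2 + μ' k * (-2 * x' k + 2 * b' k)
          = (μ' k)^2 + (-2 * (μ' k * x' k) + 2 * (μ' k * b' k))
      ring)]
    rw [Finset.sum_add_distrib, Finset.sum_add_distrib, ← Finset.mul_sum, ← Finset.mul_sum]
    ring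
  have hneg : (∑ k ∈ range r, -(max (shf s σ k - shf d δ k) 0)^2)
      = -(∑ k ∈ range r, (max (shf s σ k - shf d δ k) 0)^2) := by
    rw [← Finset.sum_neg_distrib]
  rw [hfrob, hfip]
  rw [hμsq, hμx, hμb]
  rw [hneg, hexp] at hsums
  linarith

end Aux

open Finset in
/-- for nonnegative diagonal `A = diag(s)`, `B = diag(d)` with
`r ≤ n`, the function `ψ(Y) = ‖A − YYᵀ‖_F² + 2⟨B, YᵀY⟩` admits a global
minimizer `Y*` that is a generalized permutation. -/
theorem exists_gen_perm_minimizer (n r : ℕ) (hr : r ≤ n)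
    (s : Fin n → ℝ) (d : Fin r → ℝ)
    (hs : ∀ i, 0 ≤ s i) (hd : ∀ i, 0 ≤ d i) :
    ∃ Y : Matrix (Fin n) (Fin r) ℝ, IsGenPerm Y ∧
      ∀ Y' : Matrix (Fin n) (Fin r) ℝ,
        frob2 (Matrix.diagonal s - Y * Yᵀ) + 2 * fip (Matrix.diagonal d) (Yᵀ * Y) ≤
        frob2 (Matrix.diagonal s - Y' * Y'ᵀ) + 2 * fip (Matrix.diagonal d) (Y'ᵀ * Y') := by
  classical
  set σ : Equiv.Perm (Fin n) := Tuple.sort (fun i => -s i) with hσdef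
  have hσ : Antitone (fun i => s (σ i)) := by
    intro i j hij
    have h := Tuple.monotone_sort (fun i => -s i) hij
    simpa using h
  set δ : Equiv.Perm (Fin r) := Tuple.sort d with hδdef
  have hδ : Monotone (fun j => d (δ j)) := Tuple.monotone_sort d
  set φ : Fin r → Fin n := fun j => σ (Fin.castLE hr (δ.symm j)) with hφdef
  have hφinj : Function.Injective φ := by
    intro j j' h
    simp only [hφdef] at h
    exact δ.symm.injective (Fin.castLE_injective hr (σ.injective h))
  set t : Fin r → ℝ := fun j => max (s (φ j) - d j) 0 with htdef
  have ht0 : ∀ j, 0 ≤ t j := fun j => le_max_right _ _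
  set Y : Matrix (Fin n) (Fin r) ℝ :=
    Matrix.of (fun i j => if i = φ j then Real.sqrt (t j) else 0) with hYdef
  have hYapp : ∀ i j, Y i j = if i = φ j then Real.sqrt (t j) else 0 := fun i j => rfl
  have hYne : ∀ i j, Y i j ≠ 0 → i = φ j := by
    intro i j h
    by_contra hne
    rw [hYapp, if_neg hne] at h
    exact h rfl
  refine ⟨Y, ⟨?_, ?_⟩, ?_⟩
  · intro i j j' hj hj'
    exact hφinj ((hYne i j hj).symm.trans (hYne i j' hj'))
  · intro i i' j hi hi'
    exact (hYne i j hi).trans (hYne i' j hi').symm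
  · intro Y'
    -- the value at Y
    have hcol : ∀ j j', (∑ i, Y i j * Y i j') = if j = j' then t j else 0 := by
      intro j j'
      by_cases hjj : j = j'
      · subst hjj
        rw [if_pos rfl]
        have e : ∀ i : Fin n, Y i j * Y i j = if i = φ j then t j else 0 := by
          intro i
          rw [hYapp]
          by_cases h : i = φ j
          · rw [if_pos h, if_pos h, Real.mul_self_sqrt (ht0 j)]
          · rw [if_neg h, if_neg h, mul_zero]
        rw [Finset.sum_congr rfl (fun i _ => e i)]
        rw [Finset.sum_ite_eq' univ (φ j) (fun _ => t j)]
        simp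
      · rw [if_neg hjj]
        apply Finset.sum_eq_zero
        intro i _
        rw [hYapp, hYapp]
        by_cases h : i = φ j
        · by_cases h' : i = φ j'
          · exact absurd (hφinj (h.symm.trans h')) hjj
          · rw [if_neg h', mul_zero]
        · rw [if_neg h, zero_mul]
    have hQ : ∀ j j', (Yᵀ * Y) j j' = if j = j' then t j else 0 := by
      intro j j'
      rw [Matrix.mul_apply]
      simp only [Matrix.transpose_apply]
      exact hcol j j'
    have hfipY : fip (Matrix.diagonal d) (Yᵀ * Y) = ∑ j, d j * t j := by
      rw [fip_diagonal]
      apply Finset.sum_congr rfl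
      intro j _
      rw [hQ, if_pos rfl]
    have hdiagY : (∑ i, s i * (Y * Yᵀ) i i) = ∑ j, s (φ j) * t j := by
      calc ∑ i, s i * (Y * Yᵀ) i i
          = ∑ i, ∑ j, (if i = φ j then s i * t j else 0) := by
            apply Finset.sum_congr rfl
            intro i _
            rw [Matrix.mul_apply, Finset.mul_sum]
            apply Finset.sum_congr rfl
            intro j _
            simp only [Matrix.transpose_apply, hYapp]
            by_cases h : i = φ j
            · simp only [if_pos h, Real.mul_self_sqrt (ht0 j)]
            · simp only [if_neg h, mul_zero]
        _ = ∑ j, ∑ i, (if i = φ j then s i * t j else 0) := Finset.sum_comm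
        _ = ∑ j, s (φ j) * t j := by
            apply Finset.sum_congr rfl
            intro j _
            rw [Finset.sum_ite_eq' univ (φ j) (fun i => s i * t j)]
            simp
    have hfrobY : frob2 (Matrix.diagonal s - Y * Yᵀ)
        = ∑ i, (s i)^2 - 2 * (∑ j, s (φ j) * t j) + ∑ j, (t j)^2 := by
      rw [frob2_diag_sub, hdiagY]
      congr 1
      rw [gram_frob]
      apply Finset.sum_congr rfl
      intro j _
      rw [Finset.sum_eq_single_of_mem j (mem_univ j) (fun c _ hc => by
        rw [hQ, if_neg (Ne.symm hc)]; ring)]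
      rw [hQ, if_pos rfl]
    have hvalj : ∀ j : Fin r, (t j)^2 - 2 * (s (φ j) * t j) + 2 * (d j * t j)
        = -(max (s (φ j) - d j) 0)^2 := by
      intro j
      rcases le_or_gt (s (φ j) - d j) 0 with h | h
      · have htj : t j = 0 := by rw [htdef]; simp [max_eq_right h]
        rw [htj, max_eq_right h]
        ring
      · have htj : t j = s (φ j) - d j := by rw [htdef]; simp [max_eq_left h.le]
        rw [htj, max_eq_left h.le]
        ring
    have hvalue : frob2 (Matrix.diagonal s - Y * Yᵀ) + 2 * fip (Matrix.diagonal d) (Yᵀ * Y)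
        = ∑ i, (s i)^2 - ∑ j, (max (s (φ j) - d j) 0)^2 := by
      rw [hfrobY, hfipY]
      have final : (∑ j, ((t j)^2 - 2 * (s (φ j) * t j) + 2 * (d j * t j)))
          = -∑ j, (max (s (φ j) - d j) 0)^2 := by
        rw [← Finset.sum_neg_distrib]
        exact Finset.sum_congr rfl fun j _ => hvalj j
      have e : (∑ j, ((t j)^2 - 2 * (s (φ j) * t j) + 2 * (d j * t j)))
          = (∑ j, (t j)^2) - 2 * (∑ j, s (φ j) * t j) + 2 * (∑ j, d j * t j) := by
        rw [Finset.sum_add_distrib, Finset.sum_sub_distrib, ← Finset.mul_sum, ← Finset.mul_sum]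
      linarith [e, final]
    have hreindex : (∑ j, (max (s (φ j) - d j) 0)^2)
        = ∑ k ∈ range r, (max (shf s σ k - shf d δ k) 0)^2 := by
      have step1 : (∑ j, (max (s (φ j) - d j) 0)^2)
          = ∑ k : Fin r, (max (s (σ (Fin.castLE hr k)) - d (δ k)) 0)^2 := by
        rw [← Equiv.sum_comp δ (fun j => (max (s (φ j) - d j) 0)^2)]
        apply Finset.sum_congr rfl
        intro k _
        have : φ (δ k) = σ (Fin.castLE hr k) := by
          simp only [hφdef, Equiv.symm_apply_apply]
        rw [this]
      rw [step1, ← sum_dite_range (fun k => (max (s (σ (Fin.castLE hr k)) - d (δ k)) 0)^2)]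
      apply Finset.sum_congr rfl
      intro k hk
      have hkr : k < r := mem_range.mp hk
      have hkn : k < n := lt_of_lt_of_le hkr hr
      simp only [dif_pos hkr, shf, dif_pos hkn]
      rfl
    have hlow := psi_lower hr s d hs hd σ δ hσ hδ Y'
    rw [hvalue, hreindex]
    exact hlow
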